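/- Let X be a compact metric space and f_{0,∞} a sequence of continuous self-maps. For 0 ≤ i ≤ j, the supremum topological sequence entropy of the shifted system (X, f_{i,∞}) is at most that of (X, f_{j,∞}): h*(f_{i,∞}) ≤ h*(f_{j,∞}). -/

import Mathlib

open Filter Set MeasureTheory

/-- `nacomp f i n = f (i+n-1) ∘ ⋯ ∘ f i`, the `n`-fold composition of the
nonautonomous system starting at index `i`. -/
def nacomp {X : Type*} (f : ℕ → X → X) (i : ℕ) : ℕ → X → X
  | 0 => id
  | n + 1 => f (i + n) ∘ nacomp f i n

/-- `E` is an `(n, ε, A)`-separated subset of `Λ` for the nonautonomous system `f`. -/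
def IsSepSet {X : Type*} [PseudoMetricSpace X] (f : ℕ → X → X) (A : ℕ → ℕ) (n : ℕ)
    (ε : ℝ) (Λ : Set X) (E : Finset X) : Prop :=
  ↑E ⊆ Λ ∧ ∀ x ∈ E, ∀ y ∈ E, x ≠ y →
    ∃ j : Fin n, ε < dist (nacomp f 0 (A j) x) (nacomp f 0 (A j) y)

/-- `s_n(ε, A, f, Λ)`: maximal cardinality of an `(n,ε,A)`-separated subset of `Λ`. -/
noncomputable def maxSep {X : Type*} [PseudoMetricSpace X] (f : ℕ → X → X) (A : ℕ → ℕ)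
    (n : ℕ) (ε : ℝ) (Λ : Set X) : ℕ :=
  sSup {m | ∃ E : Finset X, IsSepSet f A n ε Λ E ∧ E.card = m}

/-- Topological sequence entropy of `f` on `Λ` along `A`, via separated sets:
`lim_{ε → 0} limsup_n (1/n) log s_n(ε,A,f,Λ)`, the limit realized as a supremum over `ε > 0`. -/
noncomputable def sepEnt {X : Type*} [PseudoMetricSpace X] (f : ℕ → X → X) (A : ℕ → ℕ)
    (Λ : Set X) : EReal :=
  ⨆ ε : {ε : ℝ // 0 < ε},
    limsup (fun n : ℕ => ((Real.log (maxSep f A n ε Λ) / n : ℝ) : EReal)) atTop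

/-- A finite open cover of the whole space. -/
def IsFinOpenCover {X : Type*} [TopologicalSpace X] (𝒜 : Finset (Set X)) : Prop :=
  (∀ u ∈ 𝒜, IsOpen u) ∧ ⋃₀ ↑𝒜 = (univ : Set X)

/-- A cell `⋂_j (f_0^{a_j})⁻¹ (u j)` of the join `⋁_{j} f_0^{-a_j} 𝒜`. -/
def seqCell {X : Type*} (f : ℕ → X → X) (A : ℕ → ℕ) (n : ℕ) (u : Fin n → Set X) : Set X :=
  ⋂ j : Fin n, nacomp f 0 (A j.1) ⁻¹' (u j)

/-- `N((⋁_{j=1}^n f_0^{-a_j} 𝒜)|_Λ)`: the minimal cardinality of a subfamily of the join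
cover whose union contains `Λ`. -/
noncomputable def coverN {X : Type*} (f : ℕ → X → X) (A : ℕ → ℕ) (n : ℕ) (Λ : Set X)
    (𝒜 : Finset (Set X)) : ℕ :=
  sInf {m | ∃ S : Finset (Fin n → Set X), (∀ u ∈ S, ∀ j, u j ∈ 𝒜) ∧
    (Λ ⊆ ⋃ u ∈ S, seqCell f A n u) ∧ S.card = m}

/-- `h_A(f, Λ, 𝒜)`, the sequence entropy of `f` on `Λ` relative to the open cover `𝒜`. -/
noncomputable def coverEntOf {X : Type*} (f : ℕ → X → X) (A : ℕ → ℕ) (Λ : Set X)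
    (𝒜 : Finset (Set X)) : EReal :=
  limsup (fun n : ℕ => ((Real.log (coverN f A n Λ 𝒜) / n : ℝ) : EReal)) atTop

/-- `h_A(f, Λ)`: topological sequence entropy via open covers. -/
noncomputable def coverEnt {X : Type*} [TopologicalSpace X] (f : ℕ → X → X) (A : ℕ → ℕ)
    (Λ : Set X) : EReal :=
  ⨆ 𝒜 : {𝒜 : Finset (Set X) // IsFinOpenCover 𝒜}, coverEntOf f A Λ 𝒜

/-- The supremum topological sequence entropy `h*(f) = sup_A h_A(f)`. -/
noncomputable def supSeqEnt {X : Type*} [PseudoMetricSpace X] (f : ℕ → X → X) : EReal :=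
  ⨆ A : {A : ℕ → ℕ // StrictMono A}, sepEnt f A univ

/-- The `n`-th compositions system `f_{0,∞}^n`, whose `k`-th map is `f_{kn}^n`. -/
def compSys {X : Type*} (f : ℕ → X → X) (n : ℕ) : ℕ → X → X :=
  fun k => nacomp f (k * n) n

/-- A finite measurable partition of the space. -/
def IsFinMeasPartition {X : Type*} [MeasurableSpace X] (P : Finset (Set X)) : Prop :=
  (∀ s ∈ P, MeasurableSet s) ∧ ((P : Set (Set X)).PairwiseDisjoint id) ∧
    ⋃₀ ↑P = (univ : Set X)

/-- `h_{A,μ}(f, P) = limsup (1/n) H_μ(⋁_{j=1}^n f_0^{-a_j} P)`. -/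
noncomputable def measSeqEntPart {X : Type*} [MeasurableSpace X] (μ : Measure X)
    (f : ℕ → X → X) (A : ℕ → ℕ) (P : Finset (Set X)) : EReal :=
  limsup (fun n : ℕ =>
    (((∑ u : Fin n → {s // s ∈ P},
        Real.negMulLog (μ (seqCell f A n (fun j => (u j : Set X)))).toReal) / n : ℝ) : EReal))
    atTop

/-- The measure-theoretic sequence entropy `h_{A,μ}(f)`. -/
noncomputable def measSeqEnt {X : Type*} [MeasurableSpace X] (μ : Measure X)
    (f : ℕ → X → X) (A : ℕ → ℕ) : EReal :=
  ⨆ P : {P : Finset (Set X) // IsFinMeasPartition P}, measSeqEntPart μ f A P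

/-- Covering dimension at most `d`: every finite open cover has a finite open refinement
of order at most `d + 1`. -/
def HasCovDimLE (X : Type*) [TopologicalSpace X] (d : ℕ) : Prop :=
  ∀ 𝒜 : Finset (Set X), IsFinOpenCover 𝒜 → ∃ ℬ : Finset (Set X), IsFinOpenCover ℬ ∧
    (∀ v ∈ ℬ, ∃ u ∈ 𝒜, v ⊆ u) ∧ ∀ x : X, ({v : Set X | v ∈ ℬ ∧ x ∈ v}).ncard ≤ d + 1

/-- The induced nonautonomous system `f̂` on the space of Borel probability measures,
carrying the Lévy–Prokhorov (Prohorov) metric: `f̂ n μ = (f n)_* μ`. -/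
noncomputable def inducedSys {X : Type*} [MeasurableSpace X] (f : ℕ → X → X)
    (hf : ∀ n, Measurable (f n)) :
    ℕ → LevyProkhorov (ProbabilityMeasure X) → LevyProkhorov (ProbabilityMeasure X) :=
  fun n μ => (LevyProkhorov.toMeasureEquiv (α := ProbabilityMeasure X)).symm
    (((LevyProkhorov.toMeasureEquiv (α := ProbabilityMeasure X)) μ).map (hf n).aemeasurable)

/-- Multi-sensitivity of a nonautonomous system. -/
def MultiSensitive {X : Type*} [PseudoMetricSpace X] (f : ℕ → X → X) : Prop :=
  ∃ δ : ℝ, 0 < δ ∧ ∀ (k : ℕ) (V : Fin k → Set X),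
    (∀ i, IsOpen (V i)) → (∀ i, (V i).Nonempty) →
      ∃ n : ℕ, 1 ≤ n ∧ ∀ i, δ < Metric.diam (nacomp f 0 n '' V i)

theorem exists_class_fun {X : Type*} [MetricSpace X] [CompactSpace X] (f : ℕ → X → X)
    (A : ℕ → ℕ) (n : ℕ) {ε : ℝ} (hε : 0 < ε) :
    ∃ (T : Finset (Fin n → X)) (c : X → (Fin n → X)), (∀ x, c x ∈ T) ∧
      ∀ x y, c x = c y → ∀ j : Fin n, dist (nacomp f 0 (A j) x) (nacomp f 0 (A j) y) < ε := by
  set Φ : X → (Fin n → X) := fun x j => nacomp f 0 (A j) x with hΦ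
  have hTB : TotallyBounded (univ : Set (Fin n → X)) := isCompact_univ.totallyBounded
  rw [Metric.totallyBounded_iff] at hTB
  obtain ⟨t, htf, htc⟩ := hTB (ε/2) (by linarith)
  have hmem : ∀ x : X, ∃ y ∈ t, Φ x ∈ Metric.ball y (ε/2) := by
    intro x; simpa using htc (mem_univ (Φ x))
  choose c hc1 hc2 using hmem
  refine ⟨htf.toFinset, c, fun x => htf.mem_toFinset.mpr (hc1 x), ?_⟩
  intro x y hxy j
  have h2 := Metric.mem_ball.mp (hc2 y)
  have h3 := Metric.mem_ball.mp (hc2 x)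
  rw [hxy] at h3
  calc dist (nacomp f 0 (A j) x) (nacomp f 0 (A j) y) = dist (Φ x j) (Φ y j) := rfl
  _ ≤ dist (Φ x) (Φ y) := dist_le_pi_dist _ _ _
  _ ≤ dist (Φ x) (c y) + dist (Φ y) (c y) := dist_triangle_right _ _ _
  _ < ε/2 + ε/2 := add_lt_add h3 h2
  _ = ε := by ring

theorem sep_bddAbove {X : Type*} [MetricSpace X] [CompactSpace X] (f : ℕ → X → X)
    (A : ℕ → ℕ) (n : ℕ) {ε : ℝ} (hε : 0 < ε) (Λ : Set X) :
    BddAbove {m | ∃ E : Finset X, IsSepSet f A n ε Λ E ∧ E.card = m} := by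
  obtain ⟨T, c, hcT, hsep⟩ := exists_class_fun f A n hε
  refine ⟨T.card, ?_⟩
  rintro m ⟨E, ⟨-, hE⟩, rfl⟩
  apply Finset.card_le_card_of_injOn c (fun x _ => hcT x)
  intro x hx y hy hxy
  by_contra hne
  obtain ⟨j, hj⟩ := hE x hx y hy hne
  exact absurd (hsep x y hxy j) (not_lt.mpr hj.le)

theorem card_le_maxSep {X : Type*} [MetricSpace X] [CompactSpace X] {f : ℕ → X → X}
    {A : ℕ → ℕ} {n : ℕ} {ε : ℝ} (hε : 0 < ε) {Λ : Set X} {E : Finset X}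
    (hE : IsSepSet f A n ε Λ E) : E.card ≤ maxSep f A n ε Λ :=
  le_csSup (sep_bddAbove f A n hε Λ) ⟨E, hE, rfl⟩

theorem maxSep_le {X : Type*} [MetricSpace X] [CompactSpace X] {f : ℕ → X → X}
    {A : ℕ → ℕ} {n : ℕ} {ε : ℝ} {Λ : Set X} {m : ℕ}
    (h : ∀ E : Finset X, IsSepSet f A n ε Λ E → E.card ≤ m) : maxSep f A n ε Λ ≤ m := by
  have h0 : IsSepSet f A n ε Λ (∅ : Finset X) := ⟨by simp, by simp⟩
  have hne : Set.Nonempty {m | ∃ E : Finset X, IsSepSet f A n ε Λ E ∧ E.card = m} :=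
    ⟨0, ∅, h0, by simp⟩
  apply csSup_le hne
  rintro k ⟨E, hE, rfl⟩; exact h E hE

theorem one_le_maxSep {X : Type*} [MetricSpace X] [CompactSpace X] [Nonempty X]
    (f : ℕ → X → X) (A : ℕ → ℕ) (n : ℕ) {ε : ℝ} (hε : 0 < ε) :
    1 ≤ maxSep f A n ε univ := by
  obtain ⟨x⟩ := ‹Nonempty X›
  have : IsSepSet f A n ε univ {x} := by
    constructor
    · simp
    · intro a ha b hb hab
      simp only [Finset.mem_singleton] at ha hb
      exact absurd (ha.trans hb.symm) hab
  simpa using card_le_maxSep hε this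

theorem nacomp_split {X : Type*} (f : ℕ → X → X) (i d a : ℕ) :
    nacomp (fun n => f (i + n)) 0 (a + d) =
      nacomp (fun n => f (i + d + n)) 0 a ∘ nacomp (fun n => f (i + n)) 0 d := by
  induction a with
  | zero => simp [nacomp]
  | succ a ih =>
      have h1 : a + 1 + d = (a + d) + 1 := by omega
      rw [h1]
      show f (i + (0 + (a + d))) ∘ nacomp (fun n => f (i + n)) 0 (a + d) = _
      rw [ih]
      have h2 : i + (0 + (a + d)) = i + d + (0 + a) := by omega
      rw [h2]
      rfl

/-- Main counting estimate: `s_{n+d}(ε, A, f_{i,∞}) ≤ C ⬝ s_n(ε, B, f_{i+d,∞})`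
where `B k = A (k + d) - d`. -/
theorem maxSep_le_mul {X : Type*} [MetricSpace X] [CompactSpace X] (f : ℕ → X → X)
    (i d : ℕ) (A : ℕ → ℕ) (hA : StrictMono A) {ε : ℝ} (hε : 0 < ε) :
    ∃ C : ℕ, ∀ n : ℕ, maxSep (fun n => f (i + n)) A (n + d) ε univ ≤
      C * maxSep (fun n => f (i + d + n)) (fun k => A (k + d) - d) n ε univ := by
  classical
  set fi : ℕ → X → X := fun n => f (i + n) with hfi
  set fj : ℕ → X → X := fun n => f (i + d + n) with hfj
  set B : ℕ → ℕ := fun k => A (k + d) - d with hB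
  obtain ⟨T, c, hcT, hsep⟩ := exists_class_fun fi (fun k => A k) d hε
  refine ⟨T.card, fun n => ?_⟩
  set M := maxSep fj B n ε univ with hM
  apply maxSep_le
  intro E hE
  -- fiberwise decomposition along c
  have hcard : E.card = ∑ y ∈ T, (E.filter fun x => c x = y).card :=
    Finset.card_eq_sum_card_fiberwise (fun x _ => hcT x)
  rw [hcard]
  have hfiber : ∀ y ∈ T, (E.filter fun x => c x = y).card ≤ M := by
    intro y _
    set Eb := E.filter fun x => c x = y with hEb
    set g : X → X := nacomp fi 0 d with hg
    -- key separation fact for pairs in the same fiber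
    have key : ∀ x ∈ Eb, ∀ z ∈ Eb, x ≠ z → ∃ j : Fin n,
        ε < dist (nacomp fj 0 (B j) (g x)) (nacomp fj 0 (B j) (g z)) := by
      intro x hx z hz hxz
      obtain ⟨hxE, hcx⟩ := Finset.mem_filter.mp hx
      obtain ⟨hzE, hcz⟩ := Finset.mem_filter.mp hz
      obtain ⟨j, hj⟩ := hE.2 x hxE z hzE hxz
      have hjd : ¬ (j.1 < d) := by
        intro hlt
        have := hsep x z (hcx.trans hcz.symm) ⟨j.1, hlt⟩
        exact absurd hj (not_lt.mpr this.le)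
      push_neg at hjd
      have hAj : A j.1 = B (j.1 - d) + d := by
        have h1 : j.1 - d + d = j.1 := by omega
        have h2 : d ≤ A j.1 := le_trans hjd (hA.le_apply)
        simp only [hB, h1]
        omega
      refine ⟨⟨j.1 - d, by omega⟩, ?_⟩
      have heq : nacomp fi 0 (A j.1) = nacomp fj 0 (B (j.1 - d)) ∘ g := by
        rw [hAj]; exact nacomp_split f i d (B (j.1 - d))
      rw [heq] at hj
      exact hj
    have hinj : Set.InjOn g Eb := by
      intro x hx z hz hgxz
      by_contra hne
      obtain ⟨j, hj⟩ := key x hx z hz hne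
      rw [hgxz] at hj
      simp at hj
      linarith
    have hsepset : IsSepSet fj B n ε univ (Eb.image g) := by
      constructor
      · simp
      · intro p hp q hq hpq
        obtain ⟨x, hx, rfl⟩ := Finset.mem_image.mp hp
        obtain ⟨z, hz, rfl⟩ := Finset.mem_image.mp hq
        exact key x hx z hz (fun h => hpq (by rw [h]))
    calc Eb.card = (Eb.image g).card := (Finset.card_image_of_injOn hinj).symm
    _ ≤ M := card_le_maxSep hε hsepset
  calc ∑ y ∈ T, (E.filter fun x => c x = y).card ≤ ∑ _y ∈ T, M :=
        Finset.sum_le_sum hfiber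
  _ = T.card * M := by simp [Finset.sum_const, mul_comm]

theorem limsup_growth_le (s t : ℕ → ℕ) (d C : ℕ) (hC : 1 ≤ C)
    (hs : ∀ n, 1 ≤ s n) (ht : ∀ n, 1 ≤ t n) (hst : ∀ n, s (n + d) ≤ C * t n) :
    limsup (fun n : ℕ => ((Real.log (s n) / n : ℝ) : EReal)) atTop ≤
      limsup (fun n : ℕ => ((Real.log (t n) / n : ℝ) : EReal)) atTop := by
  set u : ℕ → ℝ := fun n => Real.log (s n) / n with hu
  set v : ℕ → ℝ := fun n => Real.log (t n) / n with hv
  have hv0 : ∀ n, 0 ≤ v n := fun n =>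
    div_nonneg (Real.log_nonneg (by exact_mod_cast ht n)) (Nat.cast_nonneg n)
  have hL0 : (0 : EReal) ≤ limsup (fun n : ℕ => ((v n : ℝ) : EReal)) atTop :=
    le_limsup_of_frequently_le
      (Frequently.of_forall fun n => by exact_mod_cast hv0 n) (by isBoundedDefault)
  by_cases hT : limsup (fun n : ℕ => ((v n : ℝ) : EReal)) atTop = ⊤
  · rw [hT]; exact le_top
  have hbot : limsup (fun n : ℕ => ((v n : ℝ) : EReal)) atTop ≠ ⊥ :=
    ne_bot_of_le_ne_bot (by simp) hL0
  obtain ⟨r, hr⟩ : ∃ r : ℝ, limsup (fun n : ℕ => ((v n : ℝ) : EReal)) atTop = (r : EReal) :=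
    ⟨(limsup (fun n : ℕ => ((v n : ℝ) : EReal)) atTop).toReal,
      (EReal.coe_toReal hT hbot).symm⟩
  have key : ∀ δ : ℝ, 0 < δ →
      limsup (fun n : ℕ => ((u n : ℝ) : EReal)) atTop ≤ ((r + δ : ℝ) : EReal) := by
    intro δ hδ
    have hev1 : ∀ᶠ n in atTop, v n < r + δ / 2 := by
      have hlt : limsup (fun n : ℕ => ((v n : ℝ) : EReal)) atTop < ((r + δ / 2 : ℝ) : EReal) := by
        rw [hr]; exact_mod_cast (by linarith : r < r + δ / 2)
      filter_upwards [eventually_lt_of_limsup_lt hlt] with n hn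
      exact_mod_cast hn
    have h0 : Tendsto (fun n : ℕ => Real.log C / n) atTop (nhds 0) :=
      tendsto_const_div_atTop_nhds_zero_nat _
    have hev2 : ∀ᶠ n : ℕ in atTop, Real.log C / n < δ / 2 :=
      (tendsto_order.mp h0).2 (δ / 2) (by linarith)
    have hkey : ∀ n : ℕ, 1 ≤ n → u (n + d) ≤ Real.log C / n + v n := by
      intro n hn
      have hn0 : (0:ℝ) < n := by exact_mod_cast hn
      have hnd : (0:ℝ) < ((n + d : ℕ) : ℝ) := by positivity
      have hCne : (0:ℝ) < (C:ℝ) := by exact_mod_cast hC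
      have htne : (0:ℝ) < ((t n : ℕ) : ℝ) := by exact_mod_cast ht n
      have h1 : Real.log (s (n + d)) ≤ Real.log C + Real.log (t n) := by
        rw [← Real.log_mul hCne.ne' htne.ne']
        apply Real.log_le_log (by exact_mod_cast hs (n + d))
        exact_mod_cast hst n
      have hlogC : 0 ≤ Real.log C := Real.log_nonneg (by exact_mod_cast hC)
      have hlogt : 0 ≤ Real.log (t n) := Real.log_nonneg (by exact_mod_cast ht n)
      have hle : ((n:ℝ)) ≤ ((n + d : ℕ) : ℝ) := by push_cast; linarith [Nat.cast_nonneg (α := ℝ) d]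
      calc u (n + d) = Real.log (s (n + d)) / ((n + d : ℕ) : ℝ) := rfl
      _ ≤ (Real.log C + Real.log (t n)) / ((n + d : ℕ) : ℝ) := by gcongr
      _ = Real.log C / ((n + d : ℕ) : ℝ) + Real.log (t n) / ((n + d : ℕ) : ℝ) := add_div _ _ _
      _ ≤ Real.log C / n + Real.log (t n) / n := by gcongr
      _ = Real.log C / n + v n := rfl
    obtain ⟨N1, hN1⟩ := eventually_atTop.mp hev1
    obtain ⟨N2, hN2⟩ := eventually_atTop.mp hev2
    have hfin : ∀ᶠ m : ℕ in atTop, ((u m : ℝ) : EReal) ≤ ((r + δ : ℝ) : EReal) := by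
      rw [eventually_atTop]
      refine ⟨(max 1 (max N1 N2)) + d, fun m hm => ?_⟩
      have hm' : m = (m - d) + d := by
        have := le_trans (Nat.le_add_left d (max 1 (max N1 N2))) hm
        omega
      have h1 : 1 ≤ m - d := by
        have h := le_max_left 1 (max N1 N2); omega
      have h2 : N1 ≤ m - d := by
        have h := le_max_left N1 N2; have h' := le_max_right 1 (max N1 N2); omega
      have h3 : N2 ≤ m - d := by
        have h := le_max_right N1 N2; have h' := le_max_right 1 (max N1 N2); omega
      have hum : u m ≤ r + δ := by
        rw [hm']
        calc u ((m - d) + d) ≤ Real.log C / ((m - d : ℕ) : ℝ) + v (m - d) := hkey _ h1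
        _ ≤ δ / 2 + (r + δ / 2) := add_le_add (hN2 _ h3).le (hN1 _ h2).le
        _ = r + δ := by ring
      exact_mod_cast hum
    exact limsup_le_of_le (by isBoundedDefault) hfin
  rw [hr]
  by_contra hcon
  push_neg at hcon
  obtain ⟨x, hx1, hx2⟩ := exists_between hcon
  have hxtop : x ≠ ⊤ := (hx2.trans_le le_top).ne
  have hxbot : x ≠ ⊥ := ne_bot_of_le_ne_bot (by simp) hx1.le
  lift x to ℝ using ⟨hxtop, hxbot⟩ with y hy
  have hry : r < y := by exact_mod_cast hx1
  have hk := key (y - r) (by linarith)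
  rw [(by ring : r + (y - r) = y)] at hk
  exact absurd (hk.trans_lt hx2) (lt_irrefl _)


theorem maxSep_of_isEmpty {X : Type*} [PseudoMetricSpace X] [IsEmpty X] (f : ℕ → X → X)
    (A : ℕ → ℕ) (n : ℕ) (ε : ℝ) (Λ : Set X) : maxSep f A n ε Λ = 0 := by
  have h0 : IsSepSet f A n ε Λ (∅ : Finset X) := ⟨by simp, by simp⟩
  have hset : {m | ∃ E : Finset X, IsSepSet f A n ε Λ E ∧ E.card = m} = {0} := by
    ext m
    constructor
    · rintro ⟨E, -, rfl⟩
      simp [Finset.eq_empty_of_isEmpty E]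
    · rintro rfl
      exact ⟨∅, h0, by simp⟩
  rw [maxSep, hset, csSup_singleton]

theorem sepEnt_shift_le {X : Type*} [MetricSpace X] [CompactSpace X] [Nonempty X]
    (f : ℕ → X → X) (i d : ℕ) (A : ℕ → ℕ) (hA : StrictMono A) :
    sepEnt (fun n => f (i + n)) A univ ≤
      sepEnt (fun n => f (i + d + n)) (fun k => A (k + d) - d) univ := by
  apply iSup_mono
  rintro ⟨ε, hε⟩
  obtain ⟨C, hC⟩ := maxSep_le_mul f i d A hA hε
  exact limsup_growth_le (fun n => maxSep (fun n => f (i + n)) A n ε univ)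
    (fun n => maxSep (fun n => f (i + d + n)) (fun k => A (k + d) - d) n ε univ) d (C + 1)
    (Nat.le_add_left 1 C)
    (fun n => one_le_maxSep _ _ _ hε)
    (fun n => one_le_maxSep _ _ _ hε)
    (fun n => (hC n).trans (Nat.mul_le_mul_right _ (Nat.le_succ C)))

/-- The supremum topological sequence entropy of shifted systems is monotone:
`h*(f_{i,∞}) ≤ h*(f_{j,∞})` for `i ≤ j`. -/
theorem supSeqEnt_shift_mono {X : Type*} [MetricSpace X] [CompactSpace X]
    (f : ℕ → X → X) (hf : ∀ n, Continuous (f n)) (i j : ℕ) (hij : i ≤ j) :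
    supSeqEnt (fun n => f (i + n)) ≤ supSeqEnt (fun n => f (j + n)) := by
  set d := j - i with hd
  have hj : (fun n => f (j + n)) = (fun n => f (i + d + n)) := by
    funext n
    have h : j + n = i + d + n := by omega
    rw [h]
  rw [hj]
  cases isEmpty_or_nonempty X with
  | inl hX =>
      apply le_of_eq
      unfold supSeqEnt sepEnt
      congr 1
      funext A
      congr 1
      funext ε
      congr 1
      funext n
      rw [maxSep_of_isEmpty, maxSep_of_isEmpty]
  | inr hX =>
      apply iSup_le
      rintro ⟨A, hA⟩
      have hB : StrictMono (fun k => A (k + d) - d) := by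
        intro k l hkl
        have h1 := hA (show k + d < l + d by omega)
        have h2 : k + d ≤ A (k + d) := hA.le_apply
        simp only
        omega
      exact le_trans (sepEnt_shift_le f i d A hA)
        (le_iSup (fun B : {A : ℕ → ℕ // StrictMono A} =>
          sepEnt (fun n => f (i + d + n)) B univ) ⟨_, hB⟩)
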